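/- arXiv:2102.00810 — 3 statements merged into one kernel-verified Lean document; each statement's English description precedes it below -/
import Mathlib

section
/- Let x ∈ E₁, ε ≥ 0, 0 < L ≤ 2L_F, τ* > 0, and let x⁺ ∈ E₁ satisfy ψ_{x,L,τ*}(x⁺) ≤ ε + inf_{y ∈ E₁}( φ(x,y) + (L/2)·‖y − x‖² ) and f₁(x⁺) ≤ ψ_{x,L,τ*}(x⁺). Then: if f₁(x) ≤ μ/(2L_F), f₁(x⁺) ≤ ε + (L_F/μ)·f₂(x) ≤ ε + f₁(x)/2; otherwise f₁(x⁺) ≤ ε + f₁(x) − μ/(4L_F). If moreover L = L_F, then: if f₁(x) ≤ μ/L_F, f₁(x⁺) ≤ ε + (L_F/(2μ))·f₂(x) ≤ ε + f₁(x)/2; otherwise f₁(x⁺) ≤ ε + f₁(x) − μ/(2L_F). (Theorem 9: per-iteration decrease with adaptively chosen τ under the Polyak–Łojasiewicz condition.) -/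
/-- The regularized local model `ψ_{x,L,τ}(y)`. -/
noncomputable def psi {n m : ℕ}
    (F : EuclideanSpace ℝ (Fin n) → EuclideanSpace ℝ (Fin m))
    (F' : EuclideanSpace ℝ (Fin n) →
      EuclideanSpace ℝ (Fin n) →L[ℝ] EuclideanSpace ℝ (Fin m))
    (x : EuclideanSpace ℝ (Fin n)) (L τ : ℝ) (y : EuclideanSpace ℝ (Fin n)) : ℝ :=
  τ / 2 + ‖F x + F' x (y - x)‖ ^ 2 / (2 * τ) + L / 2 * ‖y - x‖ ^ 2


set_option maxHeartbeats 1000000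
open ContinuousLinearMap

lemma sInf_model_le {n m : ℕ}
    (F : EuclideanSpace ℝ (Fin n) → EuclideanSpace ℝ (Fin m))
    (F' : EuclideanSpace ℝ (Fin n) →
      EuclideanSpace ℝ (Fin n) →L[ℝ] EuclideanSpace ℝ (Fin m))
    (μ : ℝ) (hμ : 0 < μ)
    (hPL : ∀ (x : EuclideanSpace ℝ (Fin n)) (u : EuclideanSpace ℝ (Fin m)),
      μ * ‖u‖ ^ 2 ≤ ‖(ContinuousLinearMap.adjoint (F' x)) u‖ ^ 2)
    (x : EuclideanSpace ℝ (Fin n)) (L : ℝ) (hL0 : 0 < L)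
    (t : ℝ) (ht0 : 0 ≤ t) (ht1 : t ≤ 1) :
    sInf (Set.range fun y => ‖F x + F' x (y - x)‖ + L / 2 * ‖y - x‖ ^ 2)
      ≤ (1 - t) * ‖F x‖ + L / 2 * (t ^ 2 * ‖F x‖ ^ 2 / μ) := by
  set A := F' x with hA
  set B : EuclideanSpace ℝ (Fin m) →L[ℝ] EuclideanSpace ℝ (Fin m) :=
    A.comp (ContinuousLinearMap.adjoint A) with hB
  have hBapp : ∀ u, B u = A ((ContinuousLinearMap.adjoint A) u) := fun u => rfl
  have hAdn : ∀ u : EuclideanSpace ℝ (Fin m),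
      ‖(ContinuousLinearMap.adjoint A) u‖ ^ 2 = inner ℝ u (B u) := by
    intro u
    rw [← real_inner_self_eq_norm_sq, ContinuousLinearMap.adjoint_inner_left, hBapp]
  -- B is injective
  have hinj : Function.Injective B := by
    intro a b hab
    have h0 : B (a - b) = 0 := by rw [map_sub, hab, sub_self]
    have h1 : ‖(ContinuousLinearMap.adjoint A) (a - b)‖ ^ 2 = 0 := by
      rw [hAdn, h0, inner_zero_right]
    have h2 := hPL x (a - b)
    rw [hA] at h1
    rw [h1] at h2
    have h3 : ‖a - b‖ ^ 2 ≤ 0 := by nlinarith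
    have h4 : ‖a - b‖ ^ 2 = 0 := le_antisymm h3 (sq_nonneg _)
    have h5 : a - b = 0 := by
      simpa using pow_eq_zero_iff (n := 2) (by norm_num) |>.mp h4
    exact sub_eq_zero.mp h5
  have hsurj : Function.Surjective B := by
    have : Function.Injective (B : EuclideanSpace ℝ (Fin m) →ₗ[ℝ] EuclideanSpace ℝ (Fin m)) := hinj
    exact LinearMap.injective_iff_surjective.mp this
  obtain ⟨w, hw⟩ := hsurj (F x)
  -- bound ‖w‖ ≤ ‖F x‖ / μ and ‖A* w‖² ≤ ‖F x‖ * ‖w‖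
  have hAw : ‖(ContinuousLinearMap.adjoint A) w‖ ^ 2 = inner ℝ w (F x) := by
    rw [hAdn, hw, real_inner_comm]
  have hAwle : ‖(ContinuousLinearMap.adjoint A) w‖ ^ 2 ≤ ‖F x‖ * ‖w‖ := by
    rw [hAw]
    calc (inner ℝ w (F x) : ℝ) ≤ ‖w‖ * ‖F x‖ := real_inner_le_norm w (F x)
    _ = ‖F x‖ * ‖w‖ := mul_comm _ _
  have hwle : ‖w‖ ≤ ‖F x‖ / μ := by
    have h2 := hPL x w
    rw [hA] at hAwle
    rcases eq_or_lt_of_le (norm_nonneg w) with h | h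
    · rw [← h]; positivity
    · rw [div_eq_inv_mul, ← mul_le_mul_iff_right₀ hμ, ← mul_assoc, mul_inv_cancel₀ hμ.ne',
        one_mul]
      nlinarith
  have hAwle2 : ‖(ContinuousLinearMap.adjoint A) w‖ ^ 2 ≤ ‖F x‖ ^ 2 / μ := by
    calc ‖(ContinuousLinearMap.adjoint A) w‖ ^ 2 ≤ ‖F x‖ * ‖w‖ := hAwle
    _ ≤ ‖F x‖ * (‖F x‖ / μ) := by
        exact mul_le_mul_of_nonneg_left hwle (norm_nonneg _)
    _ = ‖F x‖ ^ 2 / μ := by ring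
  -- the candidate point
  set y : EuclideanSpace ℝ (Fin n) := x + (-t) • ((ContinuousLinearMap.adjoint A) w)
    with hy
  have hyx : y - x = (-t) • ((ContinuousLinearMap.adjoint A) w) := by
    rw [hy]; abel
  have hval1 : F x + A (y - x) = (1 - t) • F x := by
    rw [hyx, map_smul, ← hBapp, hw]
    module
  have hbdd : BddBelow (Set.range fun y => ‖F x + F' x (y - x)‖ + L / 2 * ‖y - x‖ ^ 2) := by
    refine ⟨0, ?_⟩
    rintro v ⟨z, rfl⟩
    positivity
  refine le_trans (csInf_le hbdd ⟨y, rfl⟩) ?_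
  have hn1 : ‖F x + A (y - x)‖ = (1 - t) * ‖F x‖ := by
    rw [hval1, norm_smul, Real.norm_eq_abs, abs_of_nonneg (by linarith)]
  have hn2 : ‖y - x‖ ^ 2 ≤ t ^ 2 * ‖F x‖ ^ 2 / μ := by
    rw [hyx, norm_smul, Real.norm_eq_abs, abs_neg, abs_of_nonneg ht0, mul_pow]
    calc t ^ 2 * ‖(ContinuousLinearMap.adjoint A) w‖ ^ 2
        ≤ t ^ 2 * (‖F x‖ ^ 2 / μ) := by
          exact mul_le_mul_of_nonneg_left hAwle2 (sq_nonneg t)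
    _ = t ^ 2 * ‖F x‖ ^ 2 / μ := by ring
  show ‖F x + A (y - x)‖ + L / 2 * ‖y - x‖ ^ 2 ≤ _
  rw [hn1]
  have := mul_le_mul_of_nonneg_left hn2 (le_of_lt (by linarith : (0:ℝ) < L / 2))
  linarith


/-- **Theorem 9.** Per-iteration decrease with adaptively chosen `τ` under the
Polyak–Łojasiewicz condition. -/
theorem per_iteration_decrease_adaptive_tau_PL
    {n m : ℕ}
    (F : EuclideanSpace ℝ (Fin n) → EuclideanSpace ℝ (Fin m))
    (F' : EuclideanSpace ℝ (Fin n) →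
      EuclideanSpace ℝ (Fin n) →L[ℝ] EuclideanSpace ℝ (Fin m))
    (hF : ∀ x, HasFDerivAt F (F' x) x)
    (LF : ℝ) (hLF : 0 < LF)
    (hLip : ∀ x y, ‖F' y - F' x‖ ≤ LF * ‖y - x‖)
    (μ : ℝ) (hμ : 0 < μ)
    (hPL : ∀ (x : EuclideanSpace ℝ (Fin n)) (u : EuclideanSpace ℝ (Fin m)),
      μ * ‖u‖ ^ 2 ≤ ‖(ContinuousLinearMap.adjoint (F' x)) u‖ ^ 2)
    (x : EuclideanSpace ℝ (Fin n))
    (ε : ℝ) (hε : 0 ≤ ε)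
    (L : ℝ) (hL0 : 0 < L) (hL : L ≤ 2 * LF)
    (τs : ℝ) (hτs : 0 < τs)
    (xp : EuclideanSpace ℝ (Fin n))
    (hxp : psi F F' x L τs xp
        ≤ ε + sInf (Set.range fun y => ‖F x + F' x (y - x)‖ + L / 2 * ‖y - x‖ ^ 2))
    (hub : ‖F xp‖ ≤ psi F F' x L τs xp) :
    ((‖F x‖ ≤ μ / (2 * LF) →
        ‖F xp‖ ≤ ε + LF / μ * ‖F x‖ ^ 2 ∧ ε + LF / μ * ‖F x‖ ^ 2 ≤ ε + ‖F x‖ / 2) ∧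
      (μ / (2 * LF) < ‖F x‖ → ‖F xp‖ ≤ ε + ‖F x‖ - μ / (4 * LF))) ∧
    (L = LF →
      (‖F x‖ ≤ μ / LF →
        ‖F xp‖ ≤ ε + LF / (2 * μ) * ‖F x‖ ^ 2 ∧
          ε + LF / (2 * μ) * ‖F x‖ ^ 2 ≤ ε + ‖F x‖ / 2) ∧
      (μ / LF < ‖F x‖ → ‖F xp‖ ≤ ε + ‖F x‖ - μ / (2 * LF))) := by

  set f := ‖F x‖ with hf
  have hf0 : 0 ≤ f := norm_nonneg _
  have hmain : ∀ t : ℝ, 0 ≤ t → t ≤ 1 →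
      ‖F xp‖ ≤ ε + ((1 - t) * f + L / 2 * (t ^ 2 * f ^ 2 / μ)) := by
    intro t ht0 ht1
    have h := sInf_model_le F F' μ hμ hPL x L hL0 t ht0 ht1
    calc ‖F xp‖ ≤ psi F F' x L τs xp := hub
    _ ≤ ε + sInf (Set.range fun y => ‖F x + F' x (y - x)‖ + L / 2 * ‖y - x‖ ^ 2) := hxp
    _ ≤ ε + ((1 - t) * f + L / 2 * (t ^ 2 * f ^ 2 / μ)) := by linarith
  have h1 := hmain 1 zero_le_one le_rfl
  -- value at t = 1 :  ε + L * f^2 / (2 μ)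
  have h1' : ‖F xp‖ ≤ ε + L / (2 * μ) * f ^ 2 := by
    have : (1 - 1) * f + L / 2 * (1 ^ 2 * f ^ 2 / μ) = L / (2 * μ) * f ^ 2 := by
      field_simp
      ring
    rw [this] at h1; exact h1
  -- value at t = μ / (L f), when μ ≤ L f
  have h2' : μ ≤ L * f → ‖F xp‖ ≤ ε + f - μ / (2 * L) := by
    intro hcase
    have hfpos : 0 < f := by nlinarith
    have ht0 : (0:ℝ) ≤ μ / (L * f) := by positivity
    have ht1 : μ / (L * f) ≤ 1 := (div_le_one (by positivity)).mpr hcase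
    have h := hmain (μ / (L * f)) ht0 ht1
    have heq : (1 - μ / (L * f)) * f + L / 2 * ((μ / (L * f)) ^ 2 * f ^ 2 / μ)
        = f - μ / (2 * L) := by
      field_simp
      ring
    rw [heq] at h
    linarith
  constructor
  · constructor
    · intro hsmall
      constructor
      · calc ‖F xp‖ ≤ ε + L / (2 * μ) * f ^ 2 := h1'
        _ ≤ ε + LF / μ * f ^ 2 := by
            have : L / (2 * μ) ≤ LF / μ := by
              rw [div_le_div_iff₀ (by positivity) (by positivity)]; nlinarith
            nlinarith [sq_nonneg f]
      · have : LF / μ * f ^ 2 ≤ f / 2 := by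
          rw [div_mul_eq_mul_div, div_le_div_iff₀ (by positivity) (by norm_num)]
          have hfle : 2 * LF * f ≤ μ := by
            rw [le_div_iff₀ (by positivity)] at hsmall
            nlinarith
          nlinarith
        linarith
    · intro hbig
      rcases le_or_gt μ (L * f) with hc | hc
      · have := h2' hc
        have : ε + f - μ / (2 * L) ≤ ε + f - μ / (4 * LF) := by
          have : μ / (4 * LF) ≤ μ / (2 * L) := by
            rw [div_le_div_iff₀ (by positivity) (by positivity)]; nlinarith
          linarith
        linarith [h2' hc]
      · -- L f < μ, use t = 1
        have hfgt : μ / (2 * LF) < f := hbig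
        have hkey : L / (2 * μ) * f ^ 2 ≤ f - μ / (4 * LF) := by
          rw [div_mul_eq_mul_div, le_sub_iff_add_le, div_add_div _ _ (by positivity) (by positivity),
            div_le_iff₀ (by positivity)]
          have h5 : μ / (2 * LF) < f := hbig
          have h6 : μ < 2 * LF * f := by
            rw [div_lt_iff₀ (by positivity)] at h5; nlinarith
          nlinarith [mul_nonneg hf0 hf0, sq_nonneg (2 * LF * f - μ),
            mul_nonneg (le_of_lt (sub_pos.mpr h6)) (le_of_lt (sub_pos.mpr hc))]
        linarith
  · intro hLeq
    subst hLeq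
    constructor
    · intro hsmall
      constructor
      · exact h1'
      · have : L / (2 * μ) * f ^ 2 ≤ f / 2 := by
          rw [div_mul_eq_mul_div, div_le_div_iff₀ (by positivity) (by norm_num)]
          have hfle : L * f ≤ μ := by
            rw [le_div_iff₀ (by positivity)] at hsmall; nlinarith
          nlinarith
        linarith
    · intro hbig
      have hc : μ ≤ L * f := by
        rw [div_lt_iff₀ (by positivity)] at hbig; nlinarith
      linarith [h2' hc]
end

section
/- Let M > 0 with ‖J‖ ≤ M (operator norm), let v ∈ E₂ with g := ‖v‖ > 0, let L > 0 and η ∈ (0,1], and set d = η·(J*J + gL·I)⁻¹J*v. Then η·‖2J*v‖/(2(M² + gL)) ≤ ‖d‖ ≤ min{ √(2g/L), η·M/L }. (Lemma 14: two-sided bounds on the length of the scaled Gauss–Newton step with τ = ‖v‖.) -/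
set_option maxHeartbeats 1000000 in
/-- **Lemma 14.** Two-sided bounds on the length of the scaled Gauss–Newton step with
`τ = ‖v‖`: with `d = η (J*J + ‖v‖L I)⁻¹ J* v` (encoded by the vector `d₀` solving
`(J*J + ‖v‖L I) d₀ = J* v`), one has
`η‖2J*v‖/(2(M² + ‖v‖L)) ≤ ‖d‖ ≤ min {√(2‖v‖/L), ηM/L}`. -/
theorem step_length_bounds
    {E₁ E₂ : Type*}
    [NormedAddCommGroup E₁] [InnerProductSpace ℝ E₁] [FiniteDimensional ℝ E₁]
    [NormedAddCommGroup E₂] [InnerProductSpace ℝ E₂] [FiniteDimensional ℝ E₂]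
    (J : E₁ →L[ℝ] E₂) (M : ℝ) (hM : 0 < M) (hJM : ‖J‖ ≤ M)
    (v : E₂) (hv : 0 < ‖v‖)
    (L : ℝ) (hL : 0 < L)
    (η : ℝ) (hη : η ∈ Set.Ioc (0 : ℝ) 1)
    (d₀ : E₁)
    (hd₀ : (ContinuousLinearMap.adjoint J) (J d₀) + (‖v‖ * L) • d₀
        = (ContinuousLinearMap.adjoint J) v)
    (d : E₁) (hd : d = η • d₀) :
    η * ‖(2 : ℝ) • (ContinuousLinearMap.adjoint J) v‖ / (2 * (M ^ 2 + ‖v‖ * L)) ≤ ‖d‖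
    ∧ ‖d‖ ≤ min (Real.sqrt (2 * ‖v‖ / L)) (η * M / L) := by
  obtain ⟨hη0, hη1⟩ := hη
  set g : ℝ := ‖v‖ with hg
  -- key energy identity
  have key : ‖J d₀‖ ^ 2 + g * L * ‖d₀‖ ^ 2 = inner ℝ (J d₀) v := by
    have h := congrArg (fun x : E₁ => (inner ℝ x d₀ : ℝ)) hd₀
    simp only [inner_add_left, inner_smul_left, RCLike.conj_to_real,
      ContinuousLinearMap.adjoint_inner_left] at h
    rw [real_inner_self_eq_norm_sq, real_inner_self_eq_norm_sq, real_inner_comm] at h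
    linarith [h]
  have hJd : ‖J d₀‖ ≤ M * ‖d₀‖ :=
    le_trans (J.le_opNorm d₀) (mul_le_mul_of_nonneg_right hJM (norm_nonneg _))
  have hinner : (inner ℝ (J d₀) v : ℝ) ≤ ‖J d₀‖ * g :=
    real_inner_le_norm _ _
  -- upper bound 1 : ‖d₀‖² ≤ g/(2L)
  have hub1 : 2 * L * ‖d₀‖ ^ 2 ≤ g := by
    have h2 : ‖J d₀‖ * g ≤ ‖J d₀‖ ^ 2 / 2 + g ^ 2 / 2 := by
      nlinarith [sq_nonneg (‖J d₀‖ - g)]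
    have h4 : g * L * ‖d₀‖ ^ 2 ≤ g ^ 2 / 2 := by nlinarith [sq_nonneg (‖J d₀‖)]
    nlinarith
  -- upper bound 2 : ‖d₀‖ ≤ M / L
  have hub2 : ‖d₀‖ ≤ M / L := by
    have h3 : g * L * ‖d₀‖ ^ 2 ≤ M * ‖d₀‖ * g := by
      nlinarith [sq_nonneg (‖J d₀‖)]
    rcases eq_or_lt_of_le (norm_nonneg d₀) with h | h
    · rw [← h]; positivity
    · rw [le_div_iff₀ hL]
      nlinarith [mul_pos hv h, mul_pos (mul_pos hv h) h]
  -- lower bound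
  have hlb : ‖(ContinuousLinearMap.adjoint J) v‖ ≤ (M ^ 2 + g * L) * ‖d₀‖ := by
    calc ‖(ContinuousLinearMap.adjoint J) v‖
        = ‖(ContinuousLinearMap.adjoint J) (J d₀) + (g * L) • d₀‖ := by rw [hd₀]
      _ ≤ ‖(ContinuousLinearMap.adjoint J) (J d₀)‖ + ‖(g * L) • d₀‖ := norm_add_le _ _
      _ ≤ M * ‖J d₀‖ + g * L * ‖d₀‖ := by
          rw [norm_smul]
          have h1 : ‖(ContinuousLinearMap.adjoint J) (J d₀)‖ ≤ M * ‖J d₀‖ := by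
            refine le_trans ((ContinuousLinearMap.adjoint J).le_opNorm _) ?_
            rw [LinearIsometryEquiv.norm_map (ContinuousLinearMap.adjoint : (E₁ →L[ℝ] E₂) ≃ₗᵢ[ℝ] (E₂ →L[ℝ] E₁)) J]
            exact mul_le_mul_of_nonneg_right hJM (norm_nonneg _)
          have h2 : ‖g * L‖ = g * L := abs_of_pos (by positivity)
          rw [h2]
          linarith
      _ ≤ (M ^ 2 + g * L) * ‖d₀‖ := by nlinarith
  have hdnorm : ‖d‖ = η * ‖d₀‖ := by
    rw [hd, norm_smul, Real.norm_eq_abs, abs_of_pos hη0]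
  constructor
  · rw [norm_smul, hdnorm]
    have hden : (0:ℝ) < 2 * (M ^ 2 + g * L) := by positivity
    rw [div_le_iff₀ hden]
    simp only [Real.norm_ofNat]
    nlinarith [norm_nonneg ((ContinuousLinearMap.adjoint J) v)]
  · refine le_min ?_ ?_
    · rw [hdnorm]
      have h1 : η * ‖d₀‖ ≤ ‖d₀‖ := by
        nlinarith [norm_nonneg d₀]
      refine le_trans h1 ?_
      have h2 : ‖d₀‖ = Real.sqrt (‖d₀‖ ^ 2) := by
        rw [Real.sqrt_sq (norm_nonneg _)]
      rw [h2]
      refine Real.sqrt_le_sqrt ?_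
      rw [le_div_iff₀ hL]
      nlinarith
    · rw [hdnorm]
      calc η * ‖d₀‖ ≤ η * (M / L) := by
            exact mul_le_mul_of_nonneg_left hub2 (le_of_lt hη0)
        _ = η * M / L := by ring
end

section
/- Let l ≥ 2(M² + L_F·P), let x ∈ E₁ with ∇g₂(x) ≠ 0, set η = 2·⟨G'(x)*G(x), M_A⁻¹G'(x)*G(x)⟩ / ( l·⟨G'(x)*G(x), M_A⁻²G'(x)*G(x)⟩ ) and x⁺ = x − η·M_A⁻¹G'(x)*G(x). Then g₂(x⁺) ≤ g₂(x) − ⟨∇g₂(x), M_A⁻¹∇g₂(x)⟩² / ( 2l·⟨∇g₂(x), M_A⁻²∇g₂(x)⟩ ). (Lemma 17: guaranteed decrease of the squared residual for the optimally scaled preconditioned step.) -/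
open scoped RealInnerProductSpace
open ContinuousLinearMap

section aux

variable {E₁ E₂ : Type*}
  [NormedAddCommGroup E₁] [InnerProductSpace ℝ E₁] [FiniteDimensional ℝ E₁]
  [NormedAddCommGroup E₂] [InnerProductSpace ℝ E₂] [FiniteDimensional ℝ E₂]

/-- Lipschitz continuity of the gradient field `x ↦ G'(x)* G(x)`. -/
lemma aux_grad_lip (G : E₁ → E₂) (G' : E₁ → E₁ →L[ℝ] E₂)
    (hG : ∀ x, HasFDerivAt G (G' x) x)
    (LF M P : ℝ) (hLF : 0 < LF) (hM : 0 < M)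
    (hLip : ∀ x y, ‖G' y - G' x‖ ≤ LF * ‖y - x‖)
    (hGM : ∀ x, ‖G' x‖ ≤ M) (hGP : ∀ x, ‖G x‖ ≤ P) (y z : E₁) :
    ‖(adjoint (G' y)) (G y) - (adjoint (G' z)) (G z)‖ ≤ (M ^ 2 + LF * P) * ‖y - z‖ := by
  have hGlip : ‖G y - G z‖ ≤ M * ‖y - z‖ :=
    (convex_univ : Convex ℝ (Set.univ : Set E₁)).norm_image_sub_le_of_norm_hasFDerivWithin_le
      (fun x _ => (hG x).hasFDerivWithinAt) (fun x _ => hGM x) trivial trivial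
  have hadj : ∀ B : E₁ →L[ℝ] E₂, ‖adjoint B‖ = ‖B‖ := fun B =>
    (ContinuousLinearMap.adjoint (𝕜 := ℝ)).norm_map B
  have h1 : ‖(adjoint (G' y)) (G y) - (adjoint (G' y)) (G z)‖ ≤ M * (M * ‖y - z‖) := by
    rw [← map_sub]
    calc ‖(adjoint (G' y)) (G y - G z)‖ ≤ ‖adjoint (G' y)‖ * ‖G y - G z‖ := le_opNorm _ _
      _ ≤ M * (M * ‖y - z‖) := by
          apply mul_le_mul _ hGlip (norm_nonneg _) hM.le
          rw [hadj]; exact hGM y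
  have h2 : ‖(adjoint (G' y)) (G z) - (adjoint (G' z)) (G z)‖ ≤ LF * ‖y - z‖ * P := by
    have : (adjoint (G' y)) (G z) - (adjoint (G' z)) (G z)
        = (adjoint (G' y) - adjoint (G' z)) (G z) := by simp
    rw [this]
    calc ‖(adjoint (G' y) - adjoint (G' z)) (G z)‖
        ≤ ‖adjoint (G' y) - adjoint (G' z)‖ * ‖G z‖ := le_opNorm _ _
      _ ≤ LF * ‖y - z‖ * P := by
          apply mul_le_mul _ (hGP z) (norm_nonneg _)
          · positivity
          · rw [← map_sub, hadj]; exact hLip z y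
  calc ‖(adjoint (G' y)) (G y) - (adjoint (G' z)) (G z)‖
      ≤ ‖(adjoint (G' y)) (G y) - (adjoint (G' y)) (G z)‖
        + ‖(adjoint (G' y)) (G z) - (adjoint (G' z)) (G z)‖ := norm_sub_le_norm_sub_add_norm_sub _ _ _
    _ ≤ M * (M * ‖y - z‖) + LF * ‖y - z‖ * P := add_le_add h1 h2
    _ = (M ^ 2 + LF * P) * ‖y - z‖ := by ring

/-- Descent lemma for `g₂ = ‖G ·‖²`. -/
lemma aux_descent (G : E₁ → E₂) (G' : E₁ → E₁ →L[ℝ] E₂)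
    (hG : ∀ x, HasFDerivAt G (G' x) x)
    (LF M P : ℝ) (hLF : 0 < LF) (hM : 0 < M)
    (hLip : ∀ x y, ‖G' y - G' x‖ ≤ LF * ‖y - x‖)
    (hGM : ∀ x, ‖G' x‖ ≤ M) (hGP : ∀ x, ‖G x‖ ≤ P)
    (l : ℝ) (hl : 2 * (M ^ 2 + LF * P) ≤ l) (y d : E₁) :
    ‖G (y + d)‖ ^ 2 ≤ ‖G y‖ ^ 2 + 2 * ⟪(adjoint (G' y)) (G y), d⟫ + l / 2 * ‖d‖ ^ 2 := by
  set v : E₁ → E₁ := fun z => (adjoint (G' z)) (G z) with hv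
  set γ : ℝ → E₁ := fun t => y + t • d with hγ
  have hγd : ∀ t : ℝ, HasDerivAt γ d t := by
    intro t
    simpa [hγ] using ((hasDerivAt_id t).smul_const d).const_add y
  have hφ : ∀ t : ℝ, HasDerivAt (fun t => ‖G (γ t)‖ ^ 2) (2 * ⟪v (γ t), d⟫) t := by
    intro t
    have hGγ : HasDerivAt (fun t => G (γ t)) ((G' (γ t)) d) t :=
      (hG (γ t)).comp_hasDerivAt t (hγd t)
    have := (hGγ.inner ℝ hGγ : HasDerivAt (fun t => ⟪G (γ t), G (γ t)⟫)
      (⟪G (γ t), (G' (γ t)) d⟫ + ⟪(G' (γ t)) d, G (γ t)⟫) t)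
    have heq : (fun t => ⟪G (γ t), G (γ t)⟫) = fun t => ‖G (γ t)‖ ^ 2 := by
      funext s; rw [real_inner_self_eq_norm_sq]
    rw [heq] at this
    convert this using 1
    show 2 * ⟪(adjoint (G' (γ t))) (G (γ t)), d⟫ = _
    rw [adjoint_inner_left, real_inner_comm ((G' (γ t)) d)]
    ring
    all_goals rfl
  set ψ : ℝ → ℝ := fun t => ‖G (γ t)‖ ^ 2 - t * (2 * ⟪v y, d⟫) - l / 2 * t ^ 2 * ‖d‖ ^ 2 with hψ
  have hψd : ∀ t : ℝ, HasDerivAt ψ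
      (2 * ⟪v (γ t), d⟫ - 2 * ⟪v y, d⟫ - l / 2 * (2 * t) * ‖d‖ ^ 2) t := by
    intro t
    have h1 : HasDerivAt (fun t : ℝ => t * (2 * ⟪v y, d⟫)) (2 * ⟪v y, d⟫) t := by
      simpa using (hasDerivAt_id t).mul_const (2 * ⟪v y, d⟫)
    have h2 : HasDerivAt (fun t : ℝ => l / 2 * t ^ 2 * ‖d‖ ^ 2) (l / 2 * (2 * t) * ‖d‖ ^ 2) t := by
      have := ((hasDerivAt_pow 2 t).const_mul (l / 2)).mul_const (‖d‖ ^ 2)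
      simpa [mul_comm, mul_assoc, mul_left_comm] using this
    exact ((hφ t).sub h1).sub h2
  have hψanti : AntitoneOn ψ (Set.Icc 0 1) := by
    apply antitoneOn_of_deriv_nonpos (convex_Icc 0 1)
    · exact fun t _ => ((hψd t).continuousAt).continuousWithinAt
    · exact fun t _ => ((hψd t).differentiableAt).differentiableWithinAt
    · intro t ht
      rw [interior_Icc] at ht
      rw [(hψd t).deriv]
      have hlip2 : ‖v (γ t) - v y‖ ≤ (M ^ 2 + LF * P) * (t * ‖d‖) := by
        have := aux_grad_lip G G' hG LF M P hLF hM hLip hGM hGP (γ t) y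
        have hdist : ‖γ t - y‖ = t * ‖d‖ := by
          simp [hγ, norm_smul, abs_of_pos ht.1]
        rw [hdist] at this; exact this
      have hin : ⟪v (γ t) - v y, d⟫ ≤ (M ^ 2 + LF * P) * (t * ‖d‖) * ‖d‖ :=
        le_trans (real_inner_le_norm _ _) (mul_le_mul_of_nonneg_right hlip2 (norm_nonneg d))
      have : 2 * ⟪v (γ t), d⟫ - 2 * ⟪v y, d⟫ = 2 * ⟪v (γ t) - v y, d⟫ := by
        rw [inner_sub_left]; ring
      rw [this]
      have hle : 2 * ⟪v (γ t) - v y, d⟫ ≤ 2 * ((M ^ 2 + LF * P) * (t * ‖d‖) * ‖d‖) := by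
        linarith
      have : 2 * ((M ^ 2 + LF * P) * (t * ‖d‖) * ‖d‖) ≤ l / 2 * (2 * t) * ‖d‖ ^ 2 := by
        have h0 : (0:ℝ) ≤ t * ‖d‖ ^ 2 := mul_nonneg ht.1.le (sq_nonneg _)
        have := mul_le_mul_of_nonneg_right hl h0
        nlinarith [sq_nonneg ‖d‖, ht.1.le]
      linarith
  have := hψanti (Set.left_mem_Icc.2 zero_le_one) (Set.right_mem_Icc.2 zero_le_one) zero_le_one
  have hγ0 : γ 0 = y := by simp [hγ]
  have hγ1 : γ 1 = y + d := by simp [hγ]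
  simp only [hψ, hγ0, hγ1] at this
  norm_num at this
  linarith

end aux

/-- **Lemma 17.** Guaranteed decrease of the squared residual `g₂ = ‖G(·)‖²` for the
optimally scaled preconditioned step, with preconditioner `M_A = A*A + c I`.
Here `w₁ = M_A⁻¹ G'(x)*G(x)` and `w₂ = M_A⁻² G'(x)*G(x)` are encoded by the equations
`M_A w₁ = G'(x)*G(x)` and `M_A w₂ = w₁`, so that `M_A⁻¹∇g₂(x) = 2w₁` and
`M_A⁻²∇g₂(x) = 2w₂` where `∇g₂(x) = 2G'(x)*G(x)`. -/
theorem preconditioned_step_decrease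
    {E₁ E₂ E₃ : Type*}
    [NormedAddCommGroup E₁] [InnerProductSpace ℝ E₁] [FiniteDimensional ℝ E₁]
    [NormedAddCommGroup E₂] [InnerProductSpace ℝ E₂] [FiniteDimensional ℝ E₂]
    [NormedAddCommGroup E₃] [InnerProductSpace ℝ E₃] [FiniteDimensional ℝ E₃]
    (G : E₁ → E₂) (G' : E₁ → E₁ →L[ℝ] E₂)
    (hG : ∀ x, HasFDerivAt G (G' x) x)
    (LF M P : ℝ) (hLF : 0 < LF) (hM : 0 < M) (hP : 0 < P)
    (hLip : ∀ x y, ‖G' y - G' x‖ ≤ LF * ‖y - x‖)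
    (hGM : ∀ x, ‖G' x‖ ≤ M) (hGP : ∀ x, ‖G x‖ ≤ P)
    (A : E₁ →L[ℝ] E₃) (c : ℝ) (hc : 0 < c)
    (l : ℝ) (hl : 2 * (M ^ 2 + LF * P) ≤ l)
    (x : E₁)
    (hgrad : (2 : ℝ) • (ContinuousLinearMap.adjoint (G' x)) (G x) ≠ 0)
    (w₁ : E₁)
    (hw₁ : (ContinuousLinearMap.adjoint A) (A w₁) + c • w₁
        = (ContinuousLinearMap.adjoint (G' x)) (G x))
    (w₂ : E₁)
    (hw₂ : (ContinuousLinearMap.adjoint A) (A w₂) + c • w₂ = w₁)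
    (η : ℝ)
    (hη : η = 2 * ⟪(ContinuousLinearMap.adjoint (G' x)) (G x), w₁⟫
        / (l * ⟪(ContinuousLinearMap.adjoint (G' x)) (G x), w₂⟫))
    (xp : E₁) (hxp : xp = x - η • w₁) :
    ‖G xp‖ ^ 2 ≤ ‖G x‖ ^ 2
      - (⟪(2 : ℝ) • (ContinuousLinearMap.adjoint (G' x)) (G x), (2 : ℝ) • w₁⟫) ^ 2
        / (2 * l * ⟪(2 : ℝ) • (ContinuousLinearMap.adjoint (G' x)) (G x), (2 : ℝ) • w₂⟫) := by
  set v : E₁ := (adjoint (G' x)) (G x) with hvdef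
  -- l is positive
  have hl0 : 0 < l := lt_of_lt_of_le (by positivity) hl
  -- v ≠ 0
  have hv0 : v ≠ 0 := fun h => hgrad (by rw [h, smul_zero])
  -- w₁ ≠ 0
  have hw₁0 : w₁ ≠ 0 := by
    intro h; apply hv0
    rw [← hw₁, h]; simp
  -- key identity : ⟪v, w₂⟫ = ‖w₁‖²
  have hb : ⟪v, w₂⟫ = ‖w₁‖ ^ 2 := by
    have h1 : ⟪v, w₂⟫ = ⟪A w₁, A w₂⟫ + c * ⟪w₁, w₂⟫ := by
      rw [← hw₁, inner_add_left, adjoint_inner_left, real_inner_smul_left]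
    have h2 : ⟪w₁, w₁⟫ = ⟪A w₁, A w₂⟫ + c * ⟪w₁, w₂⟫ := by
      nth_rewrite 2 [← hw₂]
      rw [inner_add_right, adjoint_inner_right, real_inner_smul_right]
    rw [h1, ← h2, real_inner_self_eq_norm_sq]
  have hbpos : 0 < ⟪v, w₂⟫ := by
    rw [hb]
    have : ‖w₁‖ ≠ 0 := norm_ne_zero_iff.2 hw₁0
    positivity
  set a : ℝ := ⟪v, w₁⟫ with ha
  set b : ℝ := ⟪v, w₂⟫ with hbdef
  -- descent lemma applied at y = x, d = -η • w₁
  have hdesc := aux_descent G G' hG LF M P hLF hM hLip hGM hGP l hl x (-η • w₁)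
  have hxd : x + -η • w₁ = xp := by rw [hxp]; module
  rw [hxd] at hdesc
  have hinner : ⟪v, -η • w₁⟫ = -η * a := by
    rw [real_inner_smul_right]
  have hnorm : ‖(-η : ℝ) • w₁‖ ^ 2 = η ^ 2 * ‖w₁‖ ^ 2 := by
    rw [norm_smul, mul_pow, Real.norm_eq_abs, abs_neg, sq_abs]
  rw [hinner, hnorm] at hdesc
  -- simplify η and the RHS
  have hηval : η = 2 * a / (l * b) := hη
  have hlb : l * b ≠ 0 := by positivity
  -- RHS inner products
  have hRHS : ⟪(2:ℝ) • v, (2:ℝ) • w₁⟫ = 4 * a := by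
    rw [real_inner_smul_left, real_inner_smul_right]; ring
  have hRHS2 : ⟪(2:ℝ) • v, (2:ℝ) • w₂⟫ = 4 * b := by
    rw [real_inner_smul_left, real_inner_smul_right]; ring
  rw [hRHS, hRHS2]
  -- now pure algebra
  have hbnorm : b = ‖w₁‖ ^ 2 := hb
  have hbne : b ≠ 0 := ne_of_gt hbpos
  have hlne : l ≠ 0 := ne_of_gt hl0
  have key : 2 * (-η * a) + l / 2 * (η ^ 2 * ‖w₁‖ ^ 2) = -((4 * a) ^ 2 / (2 * l * (4 * b))) := by
    rw [hηval, ← hbnorm]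
    field_simp
    ring
  linarith [hdesc, key.le, key.ge]
end
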